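/- Define C_max(ρ) = max over phase vectors α of (1/2)‖U(α) ρ U(α)† − ρ‖₁ and C_tr(ρ) = min over diagonal density matrices σ of (1/2)‖ρ − σ‖₁, where ‖·‖₁ is the trace norm. Then C_tr(ρ) ≤ C_max(ρ) ≤ 2 C_tr(ρ) for every density matrix ρ. -/

import Mathlib

open Matrix Complex
open scoped ComplexOrder

/-- The positive semidefinite square root of a positive semidefinite matrix
(removed from Mathlib; restored with its former definition). -/
noncomputable def Matrix.PosSemidef.sqrt {n : Type*} {𝕜 : Type*} [Fintype n] [RCLike 𝕜]
    [DecidableEq n] {A : Matrix n n 𝕜} (hA : Matrix.PosSemidef A) : Matrix n n 𝕜 :=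
  hA.1.eigenvectorUnitary.1 * Matrix.diagonal ((↑) ∘ (Real.sqrt ·) ∘ hA.1.eigenvalues) *
  (star hA.1.eigenvectorUnitary : Matrix n n 𝕜)

/-- Trace norm `‖A‖₁ = tr √(AᴴA)`. -/
noncomputable def traceNorm {d : ℕ} (A : Matrix (Fin d) (Fin d) ℂ) : ℝ :=
  ((Matrix.posSemidef_conjTranspose_mul_self A).sqrt).trace.re

/-- Diagonal phase unitary `U(α) = Σ_j e^{iα_j}|j⟩⟨j|`. -/
noncomputable def phaseU {d : ℕ} (α : Fin d → ℝ) : Matrix (Fin d) (Fin d) ℂ :=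
  Matrix.diagonal fun j => Complex.exp (Complex.I * (α j : ℂ))

section SqrtAux
open scoped MatrixOrder

lemma Matrix.PosSemidef.sqrt_eq_cfcSqrt {n : Type*} [Fintype n] [DecidableEq n]
    {A : Matrix n n ℂ} (hA : A.PosSemidef) : hA.sqrt = CFC.sqrt A := by
  rw [CFC.sqrt_eq_real_sqrt A hA.nonneg, cfcₙ_eq_cfc, hA.1.cfc_eq]
  rfl

lemma Matrix.PosSemidef.posSemidef_sqrt {n : Type*} [Fintype n] [DecidableEq n]
    {A : Matrix n n ℂ} (hA : A.PosSemidef) : hA.sqrt.PosSemidef := by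
  rw [hA.sqrt_eq_cfcSqrt]
  exact (CFC.sqrt_nonneg A).posSemidef

lemma Matrix.PosSemidef.sqrt_mul_self {n : Type*} [Fintype n] [DecidableEq n]
    {A : Matrix n n ℂ} (hA : A.PosSemidef) : hA.sqrt * hA.sqrt = A := by
  rw [hA.sqrt_eq_cfcSqrt]
  exact CFC.sqrt_mul_sqrt_self A hA.nonneg

lemma Matrix.PosSemidef.sq_sqrt {n : Type*} [Fintype n] [DecidableEq n]
    {A : Matrix n n ℂ} (hA : A.PosSemidef) : hA.sqrt ^ 2 = A := by
  rw [sq, hA.sqrt_mul_self]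

lemma Matrix.PosSemidef.eq_sqrt_of_sq_eq {n : Type*} [Fintype n] [DecidableEq n]
    {A B : Matrix n n ℂ} (hB : B.PosSemidef) (hA : A.PosSemidef) (h : B ^ 2 = A) :
    B = hA.sqrt := by
  rw [hA.sqrt_eq_cfcSqrt]
  exact (CFC.sqrt_unique (by rw [← sq, h]) hB.nonneg).symm

end SqrtAux

namespace TNAux

variable {d : ℕ}

lemma mul_vecMulVec (M : Matrix (Fin d) (Fin d) ℂ) (x u : Fin d → ℂ) :
    M * vecMulVec x u = vecMulVec (M *ᵥ x) u := by
  ext a b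
  simp [vecMulVec_apply, mul_apply, mulVec, dotProduct, Finset.sum_mul, mul_assoc]

lemma trace_mul_vecMulVec (M : Matrix (Fin d) (Fin d) ℂ) (x u : Fin d → ℂ) :
    (M * vecMulVec x u).trace = u ⬝ᵥ (M *ᵥ x) := by
  simp only [trace, Matrix.diag, mul_apply, vecMulVec_apply, mulVec, dotProduct, Finset.mul_sum]
  congr 1; ext a; congr 1; ext b; ring

lemma vecMulVec_mulVec (x u y : Fin d → ℂ) : vecMulVec x u *ᵥ y = (u ⬝ᵥ y) • x := by
  ext a; simp [vecMulVec_apply, mulVec, dotProduct, Finset.mul_sum, mul_comm, mul_left_comm]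

lemma vecMulVec_smul_left (c : ℂ) (x u : Fin d → ℂ) :
    vecMulVec (c • x) u = c • vecMulVec x u := by
  ext a b; simp [vecMulVec_apply, mul_assoc]

lemma dot_sum (v : Fin d → ℂ) (f : Fin d → Fin d → ℂ) :
    v ⬝ᵥ (∑ j, f j) = ∑ j, v ⬝ᵥ f j := by
  simp only [dotProduct, Finset.sum_apply, Finset.mul_sum]
  exact Finset.sum_comm

lemma sum_dot (v : Fin d → ℂ) (f : Fin d → Fin d → ℂ) :
    (∑ j, f j) ⬝ᵥ v = ∑ j, f j ⬝ᵥ v := by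
  simp only [dotProduct, Finset.sum_apply, Finset.sum_mul]
  exact Finset.sum_comm

lemma dot_conj (x y : Fin d → ℂ) : star x ⬝ᵥ y = starRingEnd ℂ (star y ⬝ᵥ x) := by
  simp [dotProduct, map_sum, mul_comm]

lemma dot_self_eq_normSq (x : Fin d → ℂ) :
    star x ⬝ᵥ x = ((∑ i, Complex.normSq (x i) : ℝ) : ℂ) := by
  simp [dotProduct, Complex.normSq_eq_conj_mul_self, Complex.ofReal_sum]

lemma dot_self_re_nonneg (x : Fin d → ℂ) : 0 ≤ (star x ⬝ᵥ x).re := by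
  rw [dot_self_eq_normSq]
  simpa using Finset.sum_nonneg fun i _ => Complex.normSq_nonneg (x i)

/-- Bessel-type inequality for a pairwise-orthogonal family with norms at most one. -/
lemma bessel (w : Fin d → Fin d → ℂ)
    (horth : ∀ i j, i ≠ j → star (w i) ⬝ᵥ w j = 0)
    (hnorm : ∀ i, (star (w i) ⬝ᵥ w i).re ≤ 1)
    (u : Fin d → ℂ) :
    ∑ j, Complex.normSq (star (w j) ⬝ᵥ u) ≤ (star u ⬝ᵥ u).re := by
  set c : Fin d → ℂ := fun j => star (w j) ⬝ᵥ u with hc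
  set r : Fin d → ℂ := u - ∑ j, c j • w j with hr
  have hstar : star r = star u - ∑ j, (starRingEnd ℂ) (c j) • star (w j) := by
    rw [hr, star_sub, star_sum]
    congr 1
    refine Finset.sum_congr rfl fun j _ => ?_
    ext a; simp [mul_comm]
  have key : star r ⬝ᵥ r
      = star u ⬝ᵥ u - ∑ j, (Complex.normSq (c j) : ℂ)
        - (∑ j, (Complex.normSq (c j) : ℂ) - ∑ j, (Complex.normSq (c j) : ℂ) * (star (w j) ⬝ᵥ w j)) := by
    rw [hstar]
    rw [sub_dotProduct]
    have h1 : star u ⬝ᵥ r = star u ⬝ᵥ u - ∑ j, (Complex.normSq (c j) : ℂ) := by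
      rw [hr, dotProduct_sub, TNAux.dot_sum]
      congr 1
      refine Finset.sum_congr rfl fun j _ => ?_
      rw [dotProduct_smul]
      have : star u ⬝ᵥ w j = (starRingEnd ℂ) (c j) := by
        rw [hc]; exact (dot_conj u (w j))
      rw [this, smul_eq_mul, Complex.mul_conj]
    have h2 : (∑ j, (starRingEnd ℂ) (c j) • star (w j)) ⬝ᵥ r
        = ∑ j, (Complex.normSq (c j) : ℂ) - ∑ j, (Complex.normSq (c j) : ℂ) * (star (w j) ⬝ᵥ w j) := by
      rw [TNAux.sum_dot, ← Finset.sum_sub_distrib]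
      refine Finset.sum_congr rfl fun j _ => ?_
      rw [smul_dotProduct, hr, dotProduct_sub, TNAux.dot_sum]
      have h3 : ∑ k, star (w j) ⬝ᵥ (c k • w k) = c j * (star (w j) ⬝ᵥ w j) := by
        rw [Finset.sum_eq_single j]
        · rw [dotProduct_smul, smul_eq_mul]
        · intro k _ hk
          rw [dotProduct_smul, horth j k (Ne.symm hk), smul_eq_mul, mul_zero]
        · intro h; exact absurd (Finset.mem_univ j) h
      rw [h3, smul_eq_mul, mul_sub]
      have h4 : (starRingEnd ℂ) (c j) * c j = (Complex.normSq (c j) : ℂ) := by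
        rw [mul_comm, Complex.mul_conj]
      have h5 : star (w j) ⬝ᵥ u = c j := rfl
      rw [h5, h4, ← mul_assoc, h4]
    rw [h1, h2]
  have h0 : 0 ≤ (star r ⬝ᵥ r).re := dot_self_re_nonneg r
  rw [key] at h0
  simp only [Complex.sub_re, Complex.re_sum, Complex.ofReal_re] at h0
  have h5 : ∀ j, ((Complex.normSq (c j) : ℂ) * (star (w j) ⬝ᵥ w j)).re
      ≤ Complex.normSq (c j) := by
    intro j
    rw [Complex.re_ofReal_mul]
    exact mul_le_of_le_one_right (Complex.normSq_nonneg _) (hnorm j)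
  have h6 : ∑ j, ((Complex.normSq (c j) : ℂ) * (star (w j) ⬝ᵥ w j)).re
      ≤ ∑ j, Complex.normSq (c j) := Finset.sum_le_sum fun j _ => h5 j
  linarith
lemma traceNorm_eq_sum_sqrt (A : Matrix (Fin d) (Fin d) ℂ) :
    traceNorm A = ∑ j, Real.sqrt ((Matrix.posSemidef_conjTranspose_mul_self A).1.eigenvalues j) := by
  rw [traceNorm, Matrix.PosSemidef.sqrt, Matrix.trace_mul_cycle]
  have h1 : star ((Matrix.posSemidef_conjTranspose_mul_self A).1.eigenvectorUnitary : Matrix (Fin d) (Fin d) ℂ)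
      * ((Matrix.posSemidef_conjTranspose_mul_self A).1.eigenvectorUnitary : Matrix (Fin d) (Fin d) ℂ) = 1 :=
    Matrix.mem_unitaryGroup_iff'.mp (Matrix.posSemidef_conjTranspose_mul_self A).1.eigenvectorUnitary.2
  rw [h1, Matrix.one_mul, Matrix.trace_diagonal]
  simp [Complex.re_sum]

/-- Singular value decomposition data for a complex matrix. -/
theorem exists_svd (A : Matrix (Fin d) (Fin d) ℂ) :
    ∃ (μ : Fin d → ℝ) (v w : Fin d → Fin d → ℂ),
      (∀ i, 0 ≤ μ i) ∧
      (∀ i j, star (v i) ⬝ᵥ v j = if i = j then 1 else 0) ∧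
      (∀ i j, i ≠ j → star (w i) ⬝ᵥ w j = 0) ∧
      (∀ i, (star (w i) ⬝ᵥ w i) = if μ i = 0 then 0 else 1) ∧
      A = ∑ j, (Real.sqrt (μ j) : ℂ) • vecMulVec (w j) (star (v j)) ∧
      traceNorm A = ∑ j, Real.sqrt (μ j) := by
  have h := Matrix.posSemidef_conjTranspose_mul_self A
  set hH := h.1 with hhH
  set μ : Fin d → ℝ := hH.eigenvalues with hμ
  set v : Fin d → Fin d → ℂ := fun i => ⇑(hH.eigenvectorBasis i) with hv
  have hμ0 : ∀ i, 0 ≤ μ i := fun i => h.eigenvalues_nonneg i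
  have hmv : ∀ i, (Aᴴ * A) *ᵥ v i = (μ i : ℂ) • v i := by
    intro i
    rw [hv, hH.mulVec_eigenvectorBasis i]
    ext a
    simp [RCLike.real_smul_eq_coe_mul, hμ]
  have horthv : ∀ i j, star (v i) ⬝ᵥ v j = if i = j then 1 else 0 := by
    intro i j
    have h2 := (orthonormal_iff_ite.mp hH.eigenvectorBasis.orthonormal) i j
    rw [← h2, EuclideanSpace.inner_eq_star_dotProduct, dotProduct_comm, hv]
  have hAv : ∀ i j, star (A *ᵥ v i) ⬝ᵥ (A *ᵥ v j) = if i = j then (μ j : ℂ) else 0 := by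
    intro i j
    calc star (A *ᵥ v i) ⬝ᵥ (A *ᵥ v j)
        = (star (v i) ᵥ* Aᴴ) ⬝ᵥ (A *ᵥ v j) := by rw [star_mulVec]
      _ = star (v i) ⬝ᵥ (Aᴴ *ᵥ (A *ᵥ v j)) := (Matrix.dotProduct_mulVec _ _ _).symm
      _ = star (v i) ⬝ᵥ ((Aᴴ * A) *ᵥ v j) := by rw [Matrix.mulVec_mulVec]
      _ = (μ j : ℂ) * (star (v i) ⬝ᵥ v j) := by
            rw [hmv, dotProduct_smul, smul_eq_mul]
      _ = if i = j then (μ j : ℂ) else 0 := by rw [horthv]; split <;> simp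
  have hker : ∀ i, μ i = 0 → A *ᵥ v i = 0 := by
    intro i hi
    have := hAv i i
    rw [if_pos rfl, hi] at this
    exact dotProduct_star_self_eq_zero.mp (by simpa using this)
  set w : Fin d → Fin d → ℂ := fun i => ((Real.sqrt (μ i) : ℂ))⁻¹ • (A *ᵥ v i) with hw
  have hstarw : ∀ i, star (w i) = ((Real.sqrt (μ i) : ℂ))⁻¹ • star (A *ᵥ v i) := by
    intro i
    ext a
    simp [hw, ← Complex.ofReal_inv]
  have hwdot : ∀ i j, star (w i) ⬝ᵥ w j
      = ((Real.sqrt (μ i) : ℂ))⁻¹ * ((Real.sqrt (μ j) : ℂ))⁻¹ * (star (A *ᵥ v i) ⬝ᵥ (A *ᵥ v j)) := by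
    intro i j
    rw [hstarw, hw, smul_dotProduct, dotProduct_smul]
    simp [smul_eq_mul]; ring
  have horthw : ∀ i j, i ≠ j → star (w i) ⬝ᵥ w j = 0 := by
    intro i j hij
    rw [hwdot, hAv, if_neg hij, mul_zero]
  have hnormw : ∀ i, star (w i) ⬝ᵥ w i = if μ i = 0 then 0 else 1 := by
    intro i
    rw [hwdot, hAv, if_pos rfl]
    by_cases hi : μ i = 0
    · rw [if_pos hi, hi]; simp
    · rw [if_neg hi]
      have hs : Real.sqrt (μ i) ≠ 0 :=
        (Real.sqrt_pos.mpr (lt_of_le_of_ne (hμ0 i) (Ne.symm hi))).ne'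
      have : ((Real.sqrt (μ i) : ℂ)) ≠ 0 := by exact_mod_cast hs
      field_simp
      rw [← Complex.ofReal_pow, Real.sq_sqrt (hμ0 i)]
  have hAvw : ∀ i, A *ᵥ v i = (Real.sqrt (μ i) : ℂ) • w i := by
    intro i
    by_cases hi : μ i = 0
    · rw [hker i hi, hw]
      simp [hker i hi]
    · rw [hw, smul_smul]
      have hs : Real.sqrt (μ i) ≠ 0 :=
        (Real.sqrt_pos.mpr (lt_of_le_of_ne (hμ0 i) (Ne.symm hi))).ne'
      have hs' : ((Real.sqrt (μ i) : ℂ)) ≠ 0 := by exact_mod_cast hs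
      rw [mul_inv_cancel₀ hs', one_smul]
  have hcomp : ∑ j, vecMulVec (v j) (star (v j)) = 1 := by
    have hU := hH.eigenvectorUnitary.2
    have h1 : (hH.eigenvectorUnitary : Matrix (Fin d) (Fin d) ℂ)
        * star (hH.eigenvectorUnitary : Matrix (Fin d) (Fin d) ℂ) = 1 :=
      Matrix.mem_unitaryGroup_iff.mp hU
    ext a b
    rw [← h1]
    simp only [mul_apply, vecMulVec_apply, Matrix.sum_apply, hH.eigenvectorUnitary_apply,
      Matrix.one_apply, star_apply, Matrix.star_apply, RCLike.star_def]
    rfl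
  have hdecomp : A = ∑ j, (Real.sqrt (μ j) : ℂ) • vecMulVec (w j) (star (v j)) := by
    calc A = A * 1 := (mul_one A).symm
      _ = A * ∑ j, vecMulVec (v j) (star (v j)) := by rw [hcomp]
      _ = ∑ j, A * vecMulVec (v j) (star (v j)) := Finset.mul_sum _ _ _
      _ = ∑ j, (Real.sqrt (μ j) : ℂ) • vecMulVec (w j) (star (v j)) := by
          refine Finset.sum_congr rfl fun j _ => ?_
          rw [mul_vecMulVec, hAvw, vecMulVec_smul_left]
  have htn : traceNorm A = ∑ j, Real.sqrt (μ j) := traceNorm_eq_sum_sqrt A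
  exact ⟨μ, v, w, hμ0, horthv, horthw, hnormw, hdecomp, htn⟩

lemma sum_mulVec' (f : Fin d → Matrix (Fin d) (Fin d) ℂ) (u : Fin d → ℂ) :
    (∑ j, f j) *ᵥ u = ∑ j, (f j) *ᵥ u := by
  ext a
  simp only [mulVec, dotProduct, Matrix.sum_apply, Finset.sum_apply, Finset.sum_mul]
  exact Finset.sum_comm

lemma re_trace_mul_le (v w : Fin d → Fin d → ℂ)
    (hv : ∀ i j, star (v i) ⬝ᵥ v j = if i = j then 1 else 0)
    (hw : ∀ i j, i ≠ j → star (w i) ⬝ᵥ w j = 0)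
    (hw1 : ∀ i, (star (w i) ⬝ᵥ w i).re ≤ 1)
    (B : Matrix (Fin d) (Fin d) ℂ) :
    (((∑ j, vecMulVec (v j) (star (w j))) * B).trace).re ≤ traceNorm B := by
  obtain ⟨ν, p, q, hν0, hp, hq, hq1, hBdec, hBtn⟩ := exists_svd B
  set X : Matrix (Fin d) (Fin d) ℂ := ∑ j, vecMulVec (v j) (star (w j)) with hX
  have hXv : ∀ u : Fin d → ℂ, X *ᵥ u = ∑ j, (star (w j) ⬝ᵥ u) • v j := by
    intro u
    rw [hX, sum_mulVec']
    exact Finset.sum_congr rfl fun j _ => vecMulVec_mulVec _ _ _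
  have htr : (X * B).trace = ∑ i, (Real.sqrt (ν i) : ℂ) * (star (p i) ⬝ᵥ (X *ᵥ q i)) := by
    conv_lhs => rw [hBdec]
    rw [Finset.mul_sum, trace_sum]
    refine Finset.sum_congr rfl fun i _ => ?_
    rw [mul_smul_comm, trace_smul, smul_eq_mul]
    congr 1
    rw [trace_mul_vecMulVec]
  have hbound : ∀ i, ‖star (p i) ⬝ᵥ (X *ᵥ q i)‖ ≤ 1 := by
    intro i
    rw [hXv, dot_sum]
    have h1 : ‖∑ j, star (p i) ⬝ᵥ ((star (w j) ⬝ᵥ q i) • v j)‖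
        ≤ ∑ j, ‖star (w j) ⬝ᵥ q i‖ * ‖star (p i) ⬝ᵥ v j‖ := by
      refine (norm_sum_le _ _).trans_eq ?_
      refine Finset.sum_congr rfl fun j _ => ?_
      rw [dotProduct_smul, smul_eq_mul, norm_mul]
    refine h1.trans ?_
    have hcs := Finset.sum_mul_sq_le_sq_mul_sq Finset.univ
      (fun j => ‖star (w j) ⬝ᵥ q i‖) (fun j => ‖star (p i) ⬝ᵥ v j‖)
    have hnsq : ∀ z : ℂ, ‖z‖ ^ 2 = Complex.normSq z := by
      intro z; rw [Complex.sq_norm]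
    have ha : ∑ j, ‖star (w j) ⬝ᵥ q i‖ ^ 2 ≤ 1 := by
      have hb := bessel w hw hw1 (q i)
      calc ∑ j, ‖star (w j) ⬝ᵥ q i‖ ^ 2
          = ∑ j, Complex.normSq (star (w j) ⬝ᵥ q i) := by
            exact Finset.sum_congr rfl fun j _ => hnsq _
        _ ≤ (star (q i) ⬝ᵥ q i).re := hb
        _ ≤ 1 := by rw [hq1 i]; split <;> simp
    have hb2 : ∑ j, ‖star (p i) ⬝ᵥ v j‖ ^ 2 ≤ 1 := by
      have hv' : ∀ a b, a ≠ b → star (v a) ⬝ᵥ v b = 0 := by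
        intro a b hab; rw [hv a b, if_neg hab]
      have hv1 : ∀ a, (star (v a) ⬝ᵥ v a).re ≤ 1 := by
        intro a; rw [hv a a, if_pos rfl]; simp
      have hb := bessel v hv' hv1 (p i)
      calc ∑ j, ‖star (p i) ⬝ᵥ v j‖ ^ 2
          = ∑ j, Complex.normSq (star (v j) ⬝ᵥ p i) := by
            refine Finset.sum_congr rfl fun j _ => ?_
            rw [dot_conj (p i) (v j), ← hnsq]
            rw [RCLike.norm_conj]
        _ ≤ (star (p i) ⬝ᵥ p i).re := hb
        _ ≤ 1 := by rw [hp i i, if_pos rfl]; simp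
    have hS0 : (0:ℝ) ≤ ∑ j, ‖star (w j) ⬝ᵥ q i‖ * ‖star (p i) ⬝ᵥ v j‖ :=
      Finset.sum_nonneg fun j _ => mul_nonneg (norm_nonneg _) (norm_nonneg _)
    nlinarith [hcs, ha, hb2, hS0, mul_le_one₀ ha (Finset.sum_nonneg fun j (_ : j ∈ Finset.univ) => sq_nonneg ‖star (p i) ⬝ᵥ v j‖) hb2]
  rw [htr, Complex.re_sum]
  calc ∑ i, ((Real.sqrt (ν i) : ℂ) * (star (p i) ⬝ᵥ (X *ᵥ q i))).re
      ≤ ∑ i, Real.sqrt (ν i) := by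
        refine Finset.sum_le_sum fun i _ => ?_
        rw [Complex.re_ofReal_mul]
        refine mul_le_of_le_one_right (Real.sqrt_nonneg _) ?_
        exact (Complex.re_le_norm _).trans (hbound i)
    _ = traceNorm B := hBtn.symm

theorem traceNorm_nonneg (A : Matrix (Fin d) (Fin d) ℂ) : 0 ≤ traceNorm A := by
  obtain ⟨μ, v, w, hμ0, _, _, _, _, htn⟩ := exists_svd A
  rw [htn]
  exact Finset.sum_nonneg fun j _ => Real.sqrt_nonneg _

theorem traceNorm_add_le (A B : Matrix (Fin d) (Fin d) ℂ) :
    traceNorm (A + B) ≤ traceNorm A + traceNorm B := by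
  obtain ⟨μ, v, w, hμ0, hv, hw, hw1, hdec, htn⟩ := exists_svd (A + B)
  set X : Matrix (Fin d) (Fin d) ℂ := ∑ j, vecMulVec (v j) (star (w j)) with hX
  have hw1' : ∀ i, (star (w i) ⬝ᵥ w i).re ≤ 1 := by
    intro i; rw [hw1 i]; split <;> simp
  have hXv : ∀ u : Fin d → ℂ, X *ᵥ u = ∑ j, (star (w j) ⬝ᵥ u) • v j := by
    intro u
    rw [hX, sum_mulVec']
    exact Finset.sum_congr rfl fun j _ => vecMulVec_mulVec _ _ _
  have hXC : ((X * (A + B)).trace) = ((traceNorm (A + B) : ℝ) : ℂ) := by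
    conv_lhs => rw [hdec]
    rw [Finset.mul_sum, trace_sum]
    have hterm : ∀ i, (X * ((Real.sqrt (μ i) : ℂ) • vecMulVec (w i) (star (v i)))).trace
        = (Real.sqrt (μ i) : ℂ) := by
      intro i
      rw [mul_smul_comm, trace_smul, smul_eq_mul, trace_mul_vecMulVec]
      have : star (v i) ⬝ᵥ (X *ᵥ w i) = if μ i = 0 then 0 else 1 := by
        rw [hXv, dot_sum]
        rw [Finset.sum_eq_single i]
        · rw [dotProduct_smul, smul_eq_mul, hv i i, if_pos rfl, mul_one, hw1 i]
        · intro b _ hb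
          rw [dotProduct_smul, smul_eq_mul, hw b i hb, zero_mul]
        · intro hmem; exact absurd (Finset.mem_univ i) hmem
      rw [this]
      by_cases hi : μ i = 0
      · rw [if_pos hi, mul_zero, hi, Real.sqrt_zero, Complex.ofReal_zero]
      · rw [if_neg hi, mul_one]
    rw [Finset.sum_congr rfl fun i _ => hterm i, htn]
    rw [Complex.ofReal_sum]
  have hsplit : (X * (A + B)).trace = (X * A).trace + (X * B).trace := by
    rw [Matrix.mul_add, trace_add]
  have : traceNorm (A + B) = ((X * A).trace).re + ((X * B).trace).re := by
    have := congrArg Complex.re hXC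
    rw [hsplit] at this
    simpa [Complex.add_re] using this.symm
  rw [this]
  exact add_le_add (re_trace_mul_le v w hv hw hw1' A) (re_trace_mul_le v w hv hw hw1' B)

lemma tn_congr {A B : Matrix (Fin d) (Fin d) ℂ} (hAB : Aᴴ * A = Bᴴ * B) :
    traceNorm A = traceNorm B := by
  have hs : (Matrix.posSemidef_conjTranspose_mul_self A).sqrt
      = (Matrix.posSemidef_conjTranspose_mul_self B).sqrt :=
    Matrix.PosSemidef.eq_sqrt_of_sq_eq
      (Matrix.posSemidef_conjTranspose_mul_self A).posSemidef_sqrt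
      (Matrix.posSemidef_conjTranspose_mul_self B)
      (by rw [Matrix.PosSemidef.sq_sqrt, hAB])
  rw [traceNorm, traceNorm, hs]

lemma traceNorm_neg (A : Matrix (Fin d) (Fin d) ℂ) : traceNorm (-A) = traceNorm A :=
  tn_congr (by simp)

lemma traceNorm_sub_comm (A B : Matrix (Fin d) (Fin d) ℂ) :
    traceNorm (A - B) = traceNorm (B - A) := by
  rw [← neg_sub, traceNorm_neg]

lemma traceNorm_smul (c : ℝ) (hc : 0 ≤ c) (A : Matrix (Fin d) (Fin d) ℂ) :
    traceNorm ((c : ℂ) • A) = c * traceNorm A := by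
  have h := Matrix.posSemidef_conjTranspose_mul_self A
  set S := h.sqrt with hS
  have hSpsd : S.PosSemidef := h.posSemidef_sqrt
  have hcS : ((c : ℂ) • S).PosSemidef := hSpsd.smul (Complex.zero_le_real.mpr hc)
  have hsq : ((c : ℂ) • S) ^ 2 = ((c : ℂ) • A)ᴴ * ((c : ℂ) • A) := by
    have hss : S * S = Aᴴ * A := h.sqrt_mul_self
    rw [sq, smul_mul_assoc, mul_smul_comm, hss, smul_smul]
    rw [Matrix.conjTranspose_smul, smul_mul_assoc, mul_smul_comm, smul_smul]
    congr 1
    simp [Complex.conj_ofReal]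
  have hs : ((c:ℂ) • S) = (Matrix.posSemidef_conjTranspose_mul_self ((c:ℂ) • A)).sqrt :=
    hcS.eq_sqrt_of_sq_eq _ hsq
  rw [traceNorm, ← hs, Matrix.trace_smul, smul_eq_mul, Complex.re_ofReal_mul, traceNorm]

lemma traceNorm_zero : traceNorm (0 : Matrix (Fin d) (Fin d) ℂ) = 0 := by
  have : (0 : Matrix (Fin d) (Fin d) ℂ) = ((0:ℝ) : ℂ) • (0 : Matrix (Fin d) (Fin d) ℂ) := by
    simp
  rw [this, traceNorm_smul 0 le_rfl, zero_mul]

lemma traceNorm_conj_unitary (M U : Matrix (Fin d) (Fin d) ℂ) (hU : Uᴴ * U = 1) :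
    traceNorm (U * M * Uᴴ) = traceNorm M := by
  have h := Matrix.posSemidef_conjTranspose_mul_self M
  set S := h.sqrt with hS
  have hSpsd : S.PosSemidef := h.posSemidef_sqrt
  have hpsd : (U * S * Uᴴ).PosSemidef := hSpsd.mul_mul_conjTranspose_same U
  have hsq : (U * S * Uᴴ) ^ 2 = (U * M * Uᴴ)ᴴ * (U * M * Uᴴ) := by
    have e1 : (U * M * Uᴴ)ᴴ = U * Mᴴ * Uᴴ := by
      rw [Matrix.conjTranspose_mul, Matrix.conjTranspose_mul, Matrix.conjTranspose_conjTranspose,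
        Matrix.mul_assoc]
    rw [e1, sq]
    have hss : S * S = Mᴴ * M := h.sqrt_mul_self
    calc U * S * Uᴴ * (U * S * Uᴴ)
        = U * (S * ((Uᴴ * U) * (S * Uᴴ))) := by simp only [mul_assoc]
      _ = U * ((S * S) * Uᴴ) := by rw [hU, one_mul]; simp only [mul_assoc]
      _ = U * (Mᴴ * ((Uᴴ * U) * (M * Uᴴ))) := by rw [hss, hU]; simp only [one_mul, mul_assoc]
      _ = U * Mᴴ * Uᴴ * (U * M * Uᴴ) := by simp only [mul_assoc]
  have hs : (U * S * Uᴴ) = (Matrix.posSemidef_conjTranspose_mul_self (U * M * Uᴴ)).sqrt :=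
    hpsd.eq_sqrt_of_sq_eq _ hsq
  rw [traceNorm, ← hs, Matrix.trace_mul_cycle, hU, Matrix.one_mul, traceNorm]

lemma traceNorm_sum_le {ι : Type*} (s : Finset ι) (f : ι → Matrix (Fin d) (Fin d) ℂ) :
    traceNorm (∑ i ∈ s, f i) ≤ ∑ i ∈ s, traceNorm (f i) := by
  classical
  induction s using Finset.induction_on with
  | empty => simp [traceNorm_zero]
  | @insert a s ha ih =>
    rw [Finset.sum_insert ha, Finset.sum_insert ha]
    exact (traceNorm_add_le _ _).trans (by linarith)

lemma phaseU_conjTranspose (α : Fin d → ℝ) :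
    (phaseU α)ᴴ = Matrix.diagonal (fun j => Complex.exp (-(Complex.I * (α j : ℂ)))) := by
  rw [phaseU, Matrix.diagonal_conjTranspose]
  refine congrArg Matrix.diagonal ?_
  funext j
  rw [Pi.star_apply, RCLike.star_def, ← Complex.exp_conj, _root_.map_mul, Complex.conj_I,
    Complex.conj_ofReal, neg_mul]

lemma phaseU_mul_conjT (α : Fin d → ℝ) : (phaseU α)ᴴ * phaseU α = 1 := by
  rw [phaseU_conjTranspose, phaseU, Matrix.diagonal_mul_diagonal]
  have : ∀ j : Fin d, Complex.exp (-(Complex.I * (α j : ℂ))) * Complex.exp (Complex.I * (α j : ℂ)) = 1 := by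
    intro j; rw [← Complex.exp_add, neg_add_cancel, Complex.exp_zero]
  simp only [this]
  exact Matrix.diagonal_one

lemma phaseU_entry (α : Fin d → ℝ) (ρ : Matrix (Fin d) (Fin d) ℂ) (j l : Fin d) :
    (phaseU α * ρ * (phaseU α)ᴴ) j l
      = Complex.exp (Complex.I * (α j : ℂ)) * ρ j l * Complex.exp (-(Complex.I * (α l : ℂ))) := by
  rw [phaseU_conjTranspose, Matrix.mul_diagonal, phaseU, Matrix.diagonal_mul]

lemma phaseU_fix_diagonal (α : Fin d → ℝ) (q : Fin d → ℂ) :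
    phaseU α * Matrix.diagonal q * (phaseU α)ᴴ = Matrix.diagonal q := by
  rw [phaseU_conjTranspose, phaseU, Matrix.diagonal_mul_diagonal, Matrix.diagonal_mul_diagonal]
  refine congrArg Matrix.diagonal ?_
  funext i
  rw [mul_right_comm, ← Complex.exp_add, add_neg_cancel, Complex.exp_zero, one_mul]

open Real in
lemma sum_phase (hd : d ≠ 0) (ρ : Matrix (Fin d) (Fin d) ℂ) :
    ∑ k : Fin d, (phaseU (fun j => 2*π*k*j/d) * ρ * (phaseU (fun j => 2*π*k*j/d))ᴴ)
      = (d : ℂ) • Matrix.diagonal (fun j => ρ j j) := by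
  ext j l
  rw [Matrix.sum_apply]
  set θ : ℝ := 2*π*((j:ℝ)-(l:ℝ))/d with hθ
  set z : ℂ := Complex.exp (Complex.I * (θ:ℂ)) with hz
  have hterm : ∀ k : Fin d,
      (phaseU (fun j' : Fin d => 2*π*k*j'/d) * ρ * (phaseU (fun j' : Fin d => 2*π*k*j'/d))ᴴ) j l
        = z ^ (k : ℕ) * ρ j l := by
    intro k
    rw [phaseU_entry, mul_right_comm, ← Complex.exp_add, hz, ← Complex.exp_nat_mul]
    congr 2
    have hdc : ((d:ℕ):ℂ) ≠ 0 := by exact_mod_cast hd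
    rw [hθ]
    push_cast
    field_simp
    ring
  rw [Finset.sum_congr rfl fun k _ => hterm k, ← Finset.sum_mul,
    Fin.sum_univ_eq_sum_range (fun i => z ^ i) d]
  by_cases hjl : j = l
  · subst hjl
    have hθ0 : θ = 0 := by rw [hθ]; ring
    have hz1 : z = 1 := by rw [hz, hθ0]; simp
    rw [hz1]
    simp [Matrix.smul_apply, Matrix.diagonal_apply_eq, mul_comm]
  · have hj : ((j:ℕ):ℝ) < d := by exact_mod_cast j.isLt
    have hl : ((l:ℕ):ℝ) < d := by exact_mod_cast l.isLt
    have hj0 : (0:ℝ) ≤ ((j:ℕ):ℝ) := by positivity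
    have hl0 : (0:ℝ) ≤ ((l:ℕ):ℝ) := by positivity
    have hdpos : (0:ℝ) < d := by
      have := Nat.pos_of_ne_zero hd; exact_mod_cast this
    have hjlr : ((j:ℕ):ℝ) ≠ ((l:ℕ):ℝ) := by
      intro hcon
      exact hjl (Fin.ext (by exact_mod_cast hcon))
    have hzd : z ^ d = 1 := by
      rw [hz, ← Complex.exp_nat_mul]
      have : ((d:ℕ):ℂ) * (Complex.I * (θ:ℂ)) = (((j:ℤ) - (l:ℤ) : ℤ) : ℂ) * (2 * (π:ℂ) * Complex.I) := by
        have hre : (d:ℝ) * θ = (((j:ℤ) - (l:ℤ) : ℤ) : ℝ) * (2 * π) := by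
          rw [hθ]; push_cast; field_simp
        calc ((d:ℕ):ℂ) * (Complex.I * (θ:ℂ)) = Complex.I * (((d:ℝ) * θ : ℝ) : ℂ) := by
              push_cast; ring
          _ = Complex.I * (((((j:ℤ) - (l:ℤ) : ℤ) : ℝ) * (2 * π) : ℝ) : ℂ) := by rw [hre]
          _ = (((j:ℤ) - (l:ℤ) : ℤ) : ℂ) * (2 * (π:ℂ) * Complex.I) := by push_cast; ring
      rw [this, Complex.exp_int_mul_two_pi_mul_I]
    have hzne : z ≠ 1 := by
      intro hcon
      obtain ⟨n, hn⟩ := Complex.exp_eq_one_iff.mp (hz ▸ hcon)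
      have hn' : (θ:ℂ) = ((n * (2 * π) : ℝ) : ℂ) := by
        apply mul_left_cancel₀ Complex.I_ne_zero
        rw [hn]; push_cast; ring
      have hθn : θ = n * (2 * π) := by exact_mod_cast hn'
      have heq : ((j:ℕ):ℝ) - ((l:ℕ):ℝ) = n * d := by
        have hπ : (0:ℝ) < π := Real.pi_pos
        rw [hθ] at hθn
        field_simp at hθn
        nlinarith [hθn]
      rcases lt_trichotomy n 0 with h|h|h
      · have : (n:ℝ) ≤ -1 := by exact_mod_cast Int.le_sub_one_iff.mpr h
        nlinarith
      · subst h; simp at heq; exact hjlr (by linarith)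
      · have : (1:ℝ) ≤ (n:ℝ) := by exact_mod_cast h
        nlinarith
    rw [geom_sum_eq hzne, hzd]
    simp [Matrix.smul_apply, Matrix.diagonal_apply_ne _ hjl]

end TNAux

/-- `C_max(ρ)`: optimal visibility, the supremum over phase settings of
`(1/2)‖U(α)ρU(α)† − ρ‖₁`. -/
noncomputable def Cmax {d : ℕ} (ρ : Matrix (Fin d) (Fin d) ℂ) : ℝ :=
  sSup {x : ℝ | ∃ α : Fin d → ℝ,
    x = (1 / 2) * traceNorm (phaseU α * ρ * (phaseU α)ᴴ - ρ)}

/-- `C_tr(ρ)`: trace-distance measure of coherence, the infimum over diagonal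
density matrices `σ` of `(1/2)‖ρ − σ‖₁`. -/
noncomputable def Ctr {d : ℕ} (ρ : Matrix (Fin d) (Fin d) ℂ) : ℝ :=
  sInf {x : ℝ | ∃ q : Fin d → ℝ, (∀ j, 0 ≤ q j) ∧ (∑ j, q j) = 1 ∧
    x = (1 / 2) * traceNorm (ρ - Matrix.diagonal (fun j => (q j : ℂ)))}

open TNAux Real in
/-- `C_tr(ρ) ≤ C_max(ρ) ≤ 2 C_tr(ρ)` for every density matrix `ρ`. -/
theorem Ctr_le_Cmax_le_two_Ctr {d : ℕ} (ρ : Matrix (Fin d) (Fin d) ℂ)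
    (hρ : ρ.PosSemidef) (htr : ρ.trace = 1) :
    Ctr ρ ≤ Cmax ρ ∧ Cmax ρ ≤ 2 * Ctr ρ := by
  classical
  set SC := {x : ℝ | ∃ α : Fin d → ℝ,
    x = (1 / 2) * traceNorm (phaseU α * ρ * (phaseU α)ᴴ - ρ)} with hSC
  set ST := {x : ℝ | ∃ q : Fin d → ℝ, (∀ j, 0 ≤ q j) ∧ (∑ j, q j) = 1 ∧
    x = (1 / 2) * traceNorm (ρ - Matrix.diagonal (fun j => (q j : ℂ)))} with hST
  have hCmax : Cmax ρ = sSup SC := rfl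
  have hCtr : Ctr ρ = sInf ST := rfl
  have hd : d ≠ 0 := by
    intro h0
    subst h0
    have : ρ.trace = 0 := by rw [Matrix.trace]; simp
    rw [this] at htr
    exact zero_ne_one htr
  have hdpos : (0:ℝ) < d := by exact_mod_cast Nat.pos_of_ne_zero hd
  -- diagonal entries of ρ
  have hdiag_re : ∀ j, 0 ≤ (ρ j j).re ∧ (((ρ j j).re : ℝ) : ℂ) = ρ j j := by
    intro j
    have h2 := hρ.dotProduct_mulVec_nonneg (Pi.single j 1)
    have he : star (Pi.single j (1:ℂ)) ⬝ᵥ (ρ *ᵥ Pi.single j 1) = ρ j j := by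
      simp [mulVec, dotProduct, Pi.single_apply]
    rw [he, Complex.le_def] at h2
    refine ⟨by simpa using h2.1, ?_⟩
    apply Complex.ext
    · simp
    · simp only [Complex.ofReal_im]
      simpa using h2.2
  set q0 : Fin d → ℝ := fun j => (ρ j j).re with hq0
  have hq0sum : ∑ j, q0 j = 1 := by
    have h1 : (ρ.trace).re = 1 := by rw [htr]; simp
    rw [Matrix.trace, Complex.re_sum] at h1
    exact h1
  have hq0diag : Matrix.diagonal (fun j => ((q0 j : ℝ) : ℂ)) = Matrix.diagonal (fun j => ρ j j) := by
    refine congrArg _ ?_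
    funext j
    exact (hdiag_re j).2
  have he0mem : (1 / 2) * traceNorm (ρ - Matrix.diagonal (fun j => ((q0 j : ℝ) : ℂ))) ∈ ST :=
    ⟨q0, fun j => (hdiag_re j).1, hq0sum, rfl⟩
  have hSTne : ST.Nonempty := ⟨_, he0mem⟩
  have hSTlb : ∀ y ∈ ST, (0:ℝ) ≤ y := by
    rintro y ⟨q, -, -, rfl⟩
    have := traceNorm_nonneg (ρ - Matrix.diagonal (fun j => ((q j : ℝ) : ℂ)))
    linarith
  have hSTbdd : BddBelow ST := ⟨0, fun y hy => hSTlb y hy⟩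
  have hSCne : SC.Nonempty := ⟨_, ⟨(fun _ => 0), rfl⟩⟩
  have hSCub : ∀ x ∈ SC, x ≤ traceNorm ρ := by
    rintro x ⟨α, rfl⟩
    have h1 : phaseU α * ρ * (phaseU α)ᴴ - ρ = (phaseU α * ρ * (phaseU α)ᴴ) + (-ρ) :=
      sub_eq_add_neg _ _
    have h2 := traceNorm_add_le (phaseU α * ρ * (phaseU α)ᴴ) (-ρ)
    rw [traceNorm_conj_unitary ρ (phaseU α) (phaseU_mul_conjT α), traceNorm_neg] at h2
    rw [h1]
    linarith
  have hSCbdd : BddAbove SC := ⟨traceNorm ρ, fun x hx => hSCub x hx⟩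
  constructor
  · -- Ctr ρ ≤ Cmax ρ
    have step1 : Ctr ρ ≤ (1 / 2) * traceNorm (ρ - Matrix.diagonal (fun j => ((q0 j : ℝ) : ℂ))) := by
      rw [hCtr]; exact csInf_le hSTbdd he0mem
    have hkey := sum_phase hd ρ
    have hsum_sub : ∑ k : Fin d,
        (ρ - phaseU (fun j : Fin d => 2*π*k*j/d) * ρ * (phaseU (fun j : Fin d => 2*π*k*j/d))ᴴ)
          = (d:ℂ) • (ρ - Matrix.diagonal fun j => ρ j j) := by
      rw [Finset.sum_sub_distrib, hkey, Finset.sum_const, Finset.card_univ, Fintype.card_fin,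
        smul_sub]
      congr 1
      rw [Nat.cast_smul_eq_nsmul]
    have hρΔ : ρ - Matrix.diagonal (fun j => ((q0 j : ℝ) : ℂ))
        = ((((d:ℝ)⁻¹ : ℝ)) : ℂ) • ∑ k : Fin d,
            (ρ - phaseU (fun j : Fin d => 2*π*k*j/d) * ρ * (phaseU (fun j : Fin d => 2*π*k*j/d))ᴴ) := by
      rw [hsum_sub, smul_smul, hq0diag]
      rw [show ((((d:ℝ)⁻¹ : ℝ)) : ℂ) * (d:ℂ) = 1 by
        push_cast
        field_simp]
      rw [one_smul]
    have hterm : ∀ k : Fin d,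
        traceNorm (ρ - phaseU (fun j : Fin d => 2*π*k*j/d) * ρ * (phaseU (fun j : Fin d => 2*π*k*j/d))ᴴ)
          ≤ 2 * Cmax ρ := by
      intro k
      have hmem : (1 / 2) * traceNorm (phaseU (fun j : Fin d => 2*π*k*j/d) * ρ
          * (phaseU (fun j : Fin d => 2*π*k*j/d))ᴴ - ρ) ∈ SC := ⟨_, rfl⟩
      have hle := le_csSup hSCbdd hmem
      rw [traceNorm_sub_comm]
      rw [hCmax]
      linarith
    have hbound : traceNorm (ρ - Matrix.diagonal (fun j => ((q0 j : ℝ) : ℂ)))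
        ≤ (d:ℝ)⁻¹ * (d * (2 * Cmax ρ)) := by
      rw [hρΔ, traceNorm_smul _ (by positivity)]
      refine mul_le_mul_of_nonneg_left ?_ (by positivity)
      refine (traceNorm_sum_le _ _).trans ?_
      calc ∑ k : Fin d, traceNorm (ρ - phaseU (fun j : Fin d => 2*π*k*j/d) * ρ
            * (phaseU (fun j : Fin d => 2*π*k*j/d))ᴴ)
          ≤ ∑ _k : Fin d, 2 * Cmax ρ := Finset.sum_le_sum fun k _ => hterm k
        _ = d * (2 * Cmax ρ) := by
            rw [Finset.sum_const, Finset.card_univ, Fintype.card_fin, nsmul_eq_mul]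
    have : (d:ℝ)⁻¹ * (d * (2 * Cmax ρ)) = 2 * Cmax ρ := by field_simp
    rw [this] at hbound
    linarith
  · -- Cmax ρ ≤ 2 * Ctr ρ
    rw [hCmax, hCtr]
    refine csSup_le hSCne ?_
    rintro x ⟨α, rfl⟩
    have h2 : (1/4) * traceNorm (phaseU α * ρ * (phaseU α)ᴴ - ρ) ≤ sInf ST := by
      refine le_csInf hSTne ?_
      rintro y ⟨q, -, -, rfl⟩
      set σ : Matrix (Fin d) (Fin d) ℂ := Matrix.diagonal (fun j => ((q j : ℝ) : ℂ)) with hσ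
      have hfix : phaseU α * σ * (phaseU α)ᴴ = σ := phaseU_fix_diagonal α _
      have hsplit : phaseU α * ρ * (phaseU α)ᴴ - ρ
          = (phaseU α * (ρ - σ) * (phaseU α)ᴴ) + (σ - ρ) := by
        rw [Matrix.mul_sub, Matrix.sub_mul, hfix]
        abel
      have h3 := traceNorm_add_le (phaseU α * (ρ - σ) * (phaseU α)ᴴ) (σ - ρ)
      rw [traceNorm_conj_unitary (ρ - σ) (phaseU α) (phaseU_mul_conjT α),
        traceNorm_sub_comm σ ρ] at h3
      rw [hsplit]
      linarith
    linarith
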